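/- Let n ≥ 1 be a natural number, let C ≥ 1 be a real number, and set A = 2^{9n+6} C^7. Let a : ℕ × ℕ^n → ℝ be a family of nonnegative reals indexed by pairs (m, ξ) of a natural number and a multi-index, such that a(0, 0) = 1, a(0, ξ) = 0 for every multi-index ξ ≠ 0, and for every m ≥ 1 and every multi-index ξ: a(m, ξ) ≤ ∑_{l=1}^{m} ∑_{δ : |δ| = l} ∑_{α ≤ δ} ∑_{β ≤ δ} ∑_{γ : |γ| ≤ |α+β|} ∑_{ξ₀ ≤ ξ} a(m−l, γ+ξ₀) · binom(γ+ξ₀, ξ₀) · C(2m+1, 2l)^{−1} · (δ!/(2l)!) · binom(α + |γ|𝟙, |γ|𝟙) · binom(β + |γ|𝟙, |γ|𝟙) · C^{|ξ−ξ₀| + 2|δ| + |γ| + 1}. Then for every m ∈ ℕ and every multi-index ξ ∈ ℕ^n one has a(m, ξ) ≤ C(2m + |ξ|, |ξ|) · A^m · (2C)^{|ξ|}. -/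

import Mathlib

open Finset

private lemma choose_shift (p k j : ℕ) : p.choose k ≤ (p+j).choose (k+j) := by
  induction j with
  | zero => simp
  | succ j ih =>
    calc p.choose k ≤ (p+j).choose (k+j) := ih
    _ ≤ (p+j).choose (k+j) + (p+j).choose (k+j+1) := Nat.le_add_right _ _
    _ = (p+j+1).choose (k+j+1) := (Nat.choose_succ_succ _ _).symm

private lemma choose_le_of_le (p k q r : ℕ) (h1 : k ≤ r) (h2 : p + r ≤ q + k) :
    p.choose k ≤ q.choose r := by
  have h := choose_shift p k (r - k)
  have hr : k + (r-k) = r := by omega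
  rw [hr] at h
  exact h.trans (Nat.choose_le_choose r (by omega))

private lemma choose_mul_choose_le_add (a b c d : ℕ) :
    a.choose b * c.choose d ≤ (a+c).choose (b+d) := by
  rw [Nat.add_choose_eq]
  exact Finset.single_le_sum (f := fun ij : ℕ × ℕ => a.choose ij.1 * c.choose ij.2)
    (fun i _ => Nat.zero_le _) (Finset.HasAntidiagonal.mem_antidiagonal.mpr (rfl : (b, d).1 + (b, d).2 = b + d))

private lemma prod_choose_le {ι : Type*} [DecidableEq ι] (s : Finset ι) (f g : ι → ℕ) :
    ∏ i ∈ s, (f i + g i).choose (g i) ≤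
      ((∑ i ∈ s, f i) + ∑ i ∈ s, g i).choose (∑ i ∈ s, g i) := by
  induction s using Finset.induction with
  | empty => simp
  | @insert a s ha ih =>
    rw [prod_insert ha, sum_insert ha, sum_insert ha]
    calc (f a + g a).choose (g a) * ∏ i ∈ s, (f i + g i).choose (g i)
        ≤ (f a + g a).choose (g a) *
          ((∑ i ∈ s, f i + ∑ i ∈ s, g i).choose (∑ i ∈ s, g i)) :=
          Nat.mul_le_mul_left _ ih
      _ ≤ ((f a + g a) + (∑ i ∈ s, f i + ∑ i ∈ s, g i)).choose
            (g a + ∑ i ∈ s, g i) := choose_mul_choose_le_add _ _ _ _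
      _ = ((f a + ∑ i ∈ s, f i) + (g a + ∑ i ∈ s, g i)).choose
            (g a + ∑ i ∈ s, g i) := by ring_nf

private lemma trinomial_eq (a b c : ℕ) :
    (a+(b+c)).choose (b+c) * (b+c).choose c = (a+(b+c)).choose c * (a+b).choose b := by
  have e1 : (a+(b+c)).choose (b+c) * (b+c).factorial * a.factorial = (a+(b+c)).factorial := by
    have h := Nat.choose_mul_factorial_mul_factorial (show b+c ≤ a+(b+c) by omega)
    have hs : a+(b+c)-(b+c) = a := by omega
    rwa [hs] at h
  have e2 : (b+c).choose c * c.factorial * b.factorial = (b+c).factorial := by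
    have h := Nat.choose_mul_factorial_mul_factorial (show c ≤ b+c by omega)
    have hs : b+c-c = b := by omega
    rwa [hs] at h
  have e3 : (a+(b+c)).choose c * c.factorial * (a+b).factorial = (a+(b+c)).factorial := by
    have h := Nat.choose_mul_factorial_mul_factorial (show c ≤ a+(b+c) by omega)
    have hs : a+(b+c)-c = a+b := by omega
    rwa [hs] at h
  have e4 : (a+b).choose b * b.factorial * a.factorial = (a+b).factorial := by
    have h := Nat.choose_mul_factorial_mul_factorial (show b ≤ a+b by omega)
    have hs : a+b-b = a := by omega
    rwa [hs] at h
  have key : ((a+(b+c)).choose (b+c) * (b+c).choose c) *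
      (c.factorial * b.factorial * a.factorial) =
      ((a+(b+c)).choose c * (a+b).choose b) *
      (c.factorial * b.factorial * a.factorial) := by
    calc ((a+(b+c)).choose (b+c) * (b+c).choose c) *
        (c.factorial * b.factorial * a.factorial)
        = (a+(b+c)).choose (b+c) * ((b+c).choose c * c.factorial * b.factorial) *
          a.factorial := by ring
      _ = (a+(b+c)).choose (b+c) * (b+c).factorial * a.factorial := by rw [e2]
      _ = (a+(b+c)).factorial := e1
      _ = (a+(b+c)).choose c * c.factorial * (a+b).factorial := e3.symm
      _ = (a+(b+c)).choose c * c.factorial * ((a+b).choose b * b.factorial * a.factorial) := by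
          rw [e4]
      _ = ((a+(b+c)).choose c * (a+b).choose b) *
          (c.factorial * b.factorial * a.factorial) := by ring
  exact Nat.eq_of_mul_eq_mul_right (by positivity) key

private lemma choose_le_two_pow' (p k : ℕ) : p.choose k ≤ 2^p := by
  rcases le_or_gt k p with h | h
  · calc p.choose k ≤ ∑ m ∈ range (p+1), p.choose m :=
      Finset.single_le_sum (fun i _ => Nat.zero_le _) (mem_range.mpr (by omega))
    _ = 2^p := Nat.sum_range_choose p
  · simp [Nat.choose_eq_zero_of_lt h]

private lemma geom_bound (r : ℝ) (h0 : 0 ≤ r) (h : r ≤ 1/4) (m : ℕ) :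
    ∑ l ∈ Icc 1 m, r^l ≤ 2*r := by
  have key : ∀ M : ℕ, (1-r) * ∑ l ∈ Icc 1 M, r^l = r - r^(M+1) := by
    intro M
    induction M with
    | zero => simp
    | succ M ih =>
      rw [Finset.sum_Icc_succ_top (by omega)]
      ring_nf
      ring_nf at ih
      linear_combination ih
  have hS : 0 ≤ ∑ l ∈ Icc 1 m, r^l :=
    Finset.sum_nonneg fun i _ => pow_nonneg h0 _
  have hk := key m
  nlinarith [pow_nonneg h0 (m+1), mul_nonneg (sub_nonneg.2 h) hS]

private lemma sum_Iic_two_pow (k : ℕ) : ∑ j ∈ Iic k, (2:ℝ)^j ≤ 2^(k+1) := by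
  induction k with
  | zero =>
    have : Iic 0 = {0} := by ext x; simp
    rw [this]; norm_num
  | succ k ih =>
    have h : Iic (k+1) = insert (k+1) (Iic k) := by ext x; simp; omega
    rw [h, Finset.sum_insert (by simp)]
    have : (2:ℝ)^(k+1+1) = 2^(k+1) + 2^(k+1) := by ring
    rw [this]
    linarith

private lemma xi0_sum_bound (n : ℕ) (C : ℝ) (hC : 1 ≤ C) (ξ : Fin n → ℕ) :
    ∑ ξ₀ ∈ Fintype.piFinset (fun i => Finset.Iic (ξ i)),
      ∏ i, ((2*C)^(ξ₀ i) * C^(ξ i - ξ₀ i))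
      ≤ (2:ℝ)^n * (2*C)^(∑ i, ξ i) := by
  have hC0 : (0:ℝ) < C := by linarith
  have key : ∀ k : ℕ, ∑ j ∈ Iic k, (2*C)^j * C^(k-j) ≤ 2*(2*C)^k := by
    intro k
    have h1 : ∀ j ∈ Iic k, (2*C)^j * C^(k-j) = 2^j * C^k := by
      intro j hj
      rw [mul_pow, mul_assoc, ← pow_add]
      congr 2
      simp at hj; omega
    rw [Finset.sum_congr rfl h1, ← Finset.sum_mul]
    calc (∑ j ∈ Iic k, (2:ℝ)^j) * C^k ≤ 2^(k+1) * C^k := by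
          apply mul_le_mul_of_nonneg_right (sum_Iic_two_pow k) (by positivity)
      _ = 2*(2*C)^k := by rw [mul_pow]; ring
  calc ∑ ξ₀ ∈ Fintype.piFinset (fun i => Finset.Iic (ξ i)),
        ∏ i, ((2*C)^(ξ₀ i) * C^(ξ i - ξ₀ i))
      = ∏ i, ∑ j ∈ Iic (ξ i), (2*C)^j * C^(ξ i - j) := by
        rw [Finset.prod_univ_sum]
    _ ≤ ∏ i, (2*(2*C)^(ξ i)) := by
        apply Finset.prod_le_prod
        · intro i _
          exact Finset.sum_nonneg fun j _ => by positivity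
        · intro i _
          exact key (ξ i)
    _ = (2:ℝ)^n * (2*C)^(∑ i, ξ i) := by
        rw [Finset.prod_mul_distrib, Finset.prod_const, Finset.prod_pow_eq_pow_sum,
          Finset.card_univ, Fintype.card_fin]

set_option maxHeartbeats 1000000 in
private lemma term_bound (n : ℕ) (C : ℝ) (hC : 1 ≤ C) (m l : ℕ) (hl1 : 1 ≤ l) (hlm : l ≤ m)
    (ξ δ α β γ ξ₀ : Fin n → ℕ) (A : ℝ) (hA0 : 0 ≤ A)
    (a : ℕ → (Fin n → ℕ) → ℝ)
    (ha0 : 0 ≤ a (m - l) (γ + ξ₀))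
    (hIH : a (m-l) (γ+ξ₀) ≤ ((2*(m-l) + ∑ i, (γ+ξ₀) i).choose (∑ i, (γ+ξ₀) i) : ℝ) *
      A^(m-l) * (2*C)^(∑ i, (γ+ξ₀) i))
    (hδ : ∑ i, δ i = l) (hα : ∀ i, α i ≤ δ i) (hβ : ∀ i, β i ≤ δ i)
    (hγ : ∑ i, γ i ≤ ∑ i, (α i + β i)) (hξ₀ : ∀ i, ξ₀ i ≤ ξ i) :
    a (m - l) (γ + ξ₀) * (∏ i, ((γ i + ξ₀ i).choose (ξ₀ i) : ℝ)) *
      (((2 * m + 1).choose (2 * l) : ℝ))⁻¹ *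
      ((∏ i, ((δ i).factorial : ℝ)) / ((2 * l).factorial : ℝ)) *
      (∏ i, ((α i + ∑ j, γ j).choose (∑ j, γ j) : ℝ)) *
      (∏ i, ((β i + ∑ j, γ j).choose (∑ j, γ j) : ℝ)) *
      C ^ ((∑ i, (ξ i - ξ₀ i)) + 2 * (∑ i, δ i) + (∑ i, γ i) + 1)
    ≤ ((2*m + ∑ i, ξ i).choose (∑ i, ξ i) : ℝ) * A^(m-l) *
        (∏ i, ((2*C)^(ξ₀ i) * C^(ξ i - ξ₀ i))) * ((2:ℝ)^(4*l+4*n*l) * C^(7*l)) := by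
  have hC0 : (0:ℝ) < C := by linarith
  have h2C : (1:ℝ) ≤ 2*C := by linarith
  set g := ∑ i, γ i with hg
  set s := ∑ i, ξ₀ i with hs
  set Sξ := ∑ i, ξ i with hSξ
  set Sd := ∑ i, (ξ i - ξ₀ i) with hSd
  have hsum : ∑ i, (γ + ξ₀) i = g + s := by
    simp only [Pi.add_apply]
    rw [Finset.sum_add_distrib]
  have hsα : ∑ i, α i ≤ l := hδ ▸ Finset.sum_le_sum (fun i _ => hα i)
  have hsβ : ∑ i, β i ≤ l := hδ ▸ Finset.sum_le_sum (fun i _ => hβ i)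
  have hg2l : g ≤ 2*l := by
    rw [Finset.sum_add_distrib] at hγ; omega
  have hsS : s ≤ Sξ := Finset.sum_le_sum (fun i _ => hξ₀ i)
  rw [hsum] at hIH
  -- the Nat binomial inequality
  have h2 : (2*(m-l)+(g+s)).choose (g+s) * ∏ i, (γ i + ξ₀ i).choose (ξ₀ i)
      ≤ (2*m+Sξ).choose Sξ * (2*m+1).choose (2*l) := by
    calc (2*(m-l)+(g+s)).choose (g+s) * ∏ i, (γ i + ξ₀ i).choose (ξ₀ i)
        ≤ (2*(m-l)+(g+s)).choose (g+s) * (g+s).choose s :=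
          Nat.mul_le_mul_left _ (prod_choose_le Finset.univ γ ξ₀)
      _ = (2*(m-l)+(g+s)).choose s * (2*(m-l)+g).choose g := trinomial_eq _ _ _
      _ ≤ (2*m+Sξ).choose Sξ * (2*m+1).choose (2*l) :=
          Nat.mul_le_mul (choose_le_of_le _ _ _ _ hsS (by omega))
            (choose_le_of_le _ _ _ _ hg2l (by omega))
  have hMpos : (0:ℝ) < (((2*m+1).choose (2*l)) : ℝ) := by
    exact_mod_cast Nat.choose_pos (by omega : 2*l ≤ 2*m+1)
  have hNP : ((2*(m-l)+(g+s)).choose (g+s) : ℝ) *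
      (∏ i, ((γ i + ξ₀ i).choose (ξ₀ i) : ℝ)) * (((2*m+1).choose (2*l) : ℝ))⁻¹
      ≤ ((2*m+Sξ).choose Sξ : ℝ) := by
    have hcast : ((2*(m-l)+(g+s)).choose (g+s) : ℝ) *
        (∏ i, ((γ i + ξ₀ i).choose (ξ₀ i) : ℝ))
        ≤ ((2*m+Sξ).choose Sξ : ℝ) * (((2*m+1).choose (2*l)) : ℝ) := by
      exact_mod_cast h2
    calc ((2*(m-l)+(g+s)).choose (g+s) : ℝ) *
        (∏ i, ((γ i + ξ₀ i).choose (ξ₀ i) : ℝ)) * (((2*m+1).choose (2*l) : ℝ))⁻¹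
        ≤ (((2*m+Sξ).choose Sξ : ℝ) * (((2*m+1).choose (2*l)) : ℝ)) *
          (((2*m+1).choose (2*l) : ℝ))⁻¹ :=
          mul_le_mul_of_nonneg_right hcast (by positivity)
      _ = ((2*m+Sξ).choose Sξ : ℝ) := by
          rw [mul_assoc, mul_inv_cancel₀ (ne_of_gt hMpos), mul_one]
  have hP2 : (∏ i, ((δ i).factorial : ℝ)) / ((2*l).factorial : ℝ) ≤ 1 := by
    rw [div_le_one (by exact_mod_cast Nat.factorial_pos (2*l))]
    have h1 : (∏ i, (δ i).factorial) ≤ (2*l).factorial := by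
      calc ∏ i, (δ i).factorial ≤ (∑ i, δ i).factorial :=
        Nat.le_of_dvd (Nat.factorial_pos _) (Nat.prod_factorial_dvd_factorial_sum _ _)
      _ ≤ (2*l).factorial := Nat.factorial_le (by omega)
    exact_mod_cast h1
  have hP3gen : ∀ τ : Fin n → ℕ, (∑ i, τ i) ≤ l →
      (∏ i, ((τ i + g).choose g : ℝ)) ≤ (2:ℝ)^(l + 2*l*n) := by
    intro τ hτ
    have h1 : (∏ i, (τ i + g).choose g) ≤ 2^(l+2*l*n) := by
      calc ∏ i, (τ i + g).choose g ≤ ∏ i : Fin n, 2^(τ i + g) :=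
            Finset.prod_le_prod' (fun i _ => choose_le_two_pow' _ _)
        _ = 2^(∑ i, (τ i + g)) := Finset.prod_pow_eq_pow_sum _ _ _
        _ ≤ 2^(l+2*l*n) := by
            apply Nat.pow_le_pow_right (by norm_num)
            rw [Finset.sum_add_distrib, Finset.sum_const, Finset.card_univ,
              Fintype.card_fin, smul_eq_mul]
            have h2 : n * g ≤ n * (2*l) := Nat.mul_le_mul_left _ hg2l
            have h3 : n * (2*l) = 2*l*n := by ring
            omega
    exact_mod_cast h1
  have hCp : C ^ (Sd + 2 * (∑ i, δ i) + g + 1) ≤ C^Sd * C^(4*l+1) := by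
    have he : Sd + 2 * (∑ i, δ i) + g + 1 = Sd + (2*l + g + 1) := by rw [hδ]; ring
    rw [he, pow_add]
    exact mul_le_mul_of_nonneg_left (pow_le_pow_right₀ hC (by omega)) (by positivity)
  have hW : (∏ i, ((2*C)^(ξ₀ i) * C^(ξ i - ξ₀ i))) = (2*C)^s * C^Sd := by
    rw [Finset.prod_mul_distrib, Finset.prod_pow_eq_pow_sum, Finset.prod_pow_eq_pow_sum]
  have hconst : (2:ℝ)^(2*l) * C^(2*l) * (2:ℝ)^(l+2*l*n) * (2:ℝ)^(l+2*l*n) * C^(4*l+1)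
      ≤ (2:ℝ)^(4*l+4*n*l) * C^(7*l) := by
    have h2eq : (2:ℝ)^(2*l) * (2:ℝ)^(l+2*l*n) * (2:ℝ)^(l+2*l*n) = (2:ℝ)^(4*l+4*n*l) := by
      rw [← pow_add, ← pow_add]
      congr 1
      ring
    have hCle : C^(2*l) * C^(4*l+1) ≤ C^(7*l) := by
      rw [← pow_add]
      exact pow_le_pow_right₀ hC (by omega)
    calc (2:ℝ)^(2*l) * C^(2*l) * (2:ℝ)^(l+2*l*n) * (2:ℝ)^(l+2*l*n) * C^(4*l+1)
        = ((2:ℝ)^(2*l) * (2:ℝ)^(l+2*l*n) * (2:ℝ)^(l+2*l*n)) * (C^(2*l) * C^(4*l+1)) := by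
          ring
      _ ≤ (2:ℝ)^(4*l+4*n*l) * C^(7*l) := by
          rw [h2eq]
          exact mul_le_mul_of_nonneg_left hCle (by positivity)
  calc a (m - l) (γ + ξ₀) * (∏ i, ((γ i + ξ₀ i).choose (ξ₀ i) : ℝ)) *
      (((2 * m + 1).choose (2 * l) : ℝ))⁻¹ *
      ((∏ i, ((δ i).factorial : ℝ)) / ((2 * l).factorial : ℝ)) *
      (∏ i, ((α i + g).choose g : ℝ)) *
      (∏ i, ((β i + g).choose g : ℝ)) *
      C ^ (Sd + 2 * (∑ i, δ i) + g + 1)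
      ≤ (((2*(m-l)+(g+s)).choose (g+s) : ℝ) * A^(m-l) * (2*C)^(g+s)) *
        (∏ i, ((γ i + ξ₀ i).choose (ξ₀ i) : ℝ)) *
        (((2 * m + 1).choose (2 * l) : ℝ))⁻¹ * 1 *
        ((2:ℝ)^(l+2*l*n)) * ((2:ℝ)^(l+2*l*n)) * (C^Sd * C^(4*l+1)) := by
        gcongr <;> first
          | exact hIH | exact hP2 | exact hP3gen α hsα | exact hP3gen β hsβ | exact hCp
          | positivity
    _ = (((2*(m-l)+(g+s)).choose (g+s) : ℝ) *
          (∏ i, ((γ i + ξ₀ i).choose (ξ₀ i) : ℝ)) *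
          (((2 * m + 1).choose (2 * l) : ℝ))⁻¹) *
        (A^(m-l) * (2*C)^(g+s) * (2:ℝ)^(l+2*l*n) * (2:ℝ)^(l+2*l*n) *
          (C^Sd * C^(4*l+1))) := by ring
    _ ≤ ((2*m+Sξ).choose Sξ : ℝ) *
        (A^(m-l) * (2*C)^(g+s) * (2:ℝ)^(l+2*l*n) * (2:ℝ)^(l+2*l*n) *
          (C^Sd * C^(4*l+1))) := by
        apply mul_le_mul_of_nonneg_right hNP (by positivity)
    _ = ((2*m+Sξ).choose Sξ : ℝ) *
        (A^(m-l) * ((2*C)^g * (2*C)^s) * (2:ℝ)^(l+2*l*n) * (2:ℝ)^(l+2*l*n) *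
          (C^Sd * C^(4*l+1))) := by rw [pow_add]
    _ ≤ ((2*m+Sξ).choose Sξ : ℝ) *
        (A^(m-l) * ((2*C)^(2*l) * (2*C)^s) * (2:ℝ)^(l+2*l*n) * (2:ℝ)^(l+2*l*n) *
          (C^Sd * C^(4*l+1))) := by
        have h2C0 : (0:ℝ) ≤ 2*C := by linarith
        gcongr <;> first | exact h2C | exact hg2l | positivity
    _ = (((2*m+Sξ).choose Sξ : ℝ) * A^(m-l) * ((2*C)^s * C^Sd)) *
        ((2:ℝ)^(2*l) * C^(2*l) * (2:ℝ)^(l+2*l*n) * (2:ℝ)^(l+2*l*n) * C^(4*l+1)) := by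
        rw [mul_pow 2 C (2*l)]; ring
    _ ≤ (((2*m+Sξ).choose Sξ : ℝ) * A^(m-l) * ((2*C)^s * C^Sd)) *
        ((2:ℝ)^(4*l+4*n*l) * C^(7*l)) := by
        apply mul_le_mul_of_nonneg_left hconst (by positivity)
    _ = ((2*m+Sξ).choose Sξ : ℝ) * A^(m-l) *
        (∏ i, ((2*C)^(ξ₀ i) * C^(ξ i - ξ₀ i))) * ((2:ℝ)^(4*l+4*n*l) * C^(7*l)) := by
        rw [hW]; try ring

private lemma sum_le_pow_mul {ι : Type*} (s : Finset ι) (f : ι → ℝ) (c W : ℝ)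
    (hW : 0 ≤ W) (hcard : (s.card : ℝ) ≤ c) (h : ∀ x ∈ s, f x ≤ W) :
    ∑ x ∈ s, f x ≤ c * W := by
  calc ∑ x ∈ s, f x ≤ s.card • W := Finset.sum_le_card_nsmul s f W h
    _ = (s.card : ℝ) * W := nsmul_eq_mul _ _
    _ ≤ c * W := mul_le_mul_of_nonneg_right hcard hW

set_option maxHeartbeats 2000000 in
/-- The core inductive bound in the proof of Theorem 1.4: if a nonnegative family
`a(m, ξ)` satisfies `a(0,0) = 1`, `a(0,ξ) = 0` for `ξ ≠ 0`, and the recursive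
inequality coming from the Berman–Berndtsson–Sjöstrand recursion, then
`a(m, ξ) ≤ C(2m + |ξ|, |ξ|) A^m (2C)^{|ξ|}` with `A = 2^{9n+6} C^7`. -/
theorem stmt_11 (n : ℕ) (hn : 1 ≤ n) (C : ℝ) (hC : 1 ≤ C)
    (a : ℕ → (Fin n → ℕ) → ℝ)
    (hpos : ∀ m ξ, 0 ≤ a m ξ)
    (h00 : a 0 0 = 1)
    (h0 : ∀ ξ : Fin n → ℕ, ξ ≠ 0 → a 0 ξ = 0)
    (hrec : ∀ m : ℕ, 1 ≤ m → ∀ ξ : Fin n → ℕ,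
      a m ξ ≤
        ∑ l ∈ Finset.Icc 1 m,
          ∑ δ ∈ (Fintype.piFinset fun _ : Fin n => Finset.Iic l).filter
              (fun δ => ∑ i, δ i = l),
            ∑ α ∈ Fintype.piFinset (fun i => Finset.Iic (δ i)),
              ∑ β ∈ Fintype.piFinset (fun i => Finset.Iic (δ i)),
                ∑ γ ∈ (Fintype.piFinset fun _ : Fin n =>
                      Finset.Iic (∑ i, (α i + β i))).filter
                    (fun γ => ∑ i, γ i ≤ ∑ i, (α i + β i)),
                  ∑ ξ₀ ∈ Fintype.piFinset (fun i => Finset.Iic (ξ i)),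
                    a (m - l) (γ + ξ₀) *
                      (∏ i, ((γ i + ξ₀ i).choose (ξ₀ i) : ℝ)) *
                      (((2 * m + 1).choose (2 * l) : ℝ))⁻¹ *
                      ((∏ i, ((δ i).factorial : ℝ)) / ((2 * l).factorial : ℝ)) *
                      (∏ i, ((α i + ∑ j, γ j).choose (∑ j, γ j) : ℝ)) *
                      (∏ i, ((β i + ∑ j, γ j).choose (∑ j, γ j) : ℝ)) *
                      C ^ ((∑ i, (ξ i - ξ₀ i)) + 2 * (∑ i, δ i) + (∑ i, γ i) + 1)) :
    ∀ (m : ℕ) (ξ : Fin n → ℕ),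
      a m ξ ≤ ((2 * m + ∑ i, ξ i).choose (∑ i, ξ i) : ℝ) *
        (2 ^ (9 * n + 6) * C ^ 7) ^ m * (2 * C) ^ (∑ i, ξ i) := by
  have hC0 : (0:ℝ) < C := by linarith
  have h2C0 : (0:ℝ) ≤ 2*C := by linarith
  have hA0 : (0:ℝ) ≤ 2 ^ (9 * n + 6) * C ^ 7 := by positivity
  intro m
  induction m using Nat.strong_induction_on with
  | _ m IH =>
    intro ξ
    rcases Nat.eq_zero_or_pos m with rfl | hm
    · by_cases hξ : ξ = 0
      · subst hξ
        simp [h00]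
      · rw [h0 ξ hξ]
        have h1 : (0:ℝ) ≤ ((2 * 0 + ∑ i, ξ i).choose (∑ i, ξ i) : ℝ) := Nat.cast_nonneg _
        exact mul_nonneg (mul_nonneg h1 (pow_nonneg hA0 _)) (pow_nonneg h2C0 _)
    · -- inductive step
      refine le_trans (hrec m hm ξ) ?_
      set Sξ := ∑ i, ξ i with hSξ
      set A : ℝ := 2 ^ (9 * n + 6) * C ^ 7 with hAdef
      set TgB : ℝ := ((2 * m + Sξ).choose Sξ : ℝ) with hTgB
      have hTgB0 : (0:ℝ) ≤ TgB := Nat.cast_nonneg _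
      -- per-l bound
      have main_l : ∀ l ∈ Finset.Icc 1 m,
          (∑ δ ∈ (Fintype.piFinset fun _ : Fin n => Finset.Iic l).filter
              (fun δ => ∑ i, δ i = l),
            ∑ α ∈ Fintype.piFinset (fun i => Finset.Iic (δ i)),
              ∑ β ∈ Fintype.piFinset (fun i => Finset.Iic (δ i)),
                ∑ γ ∈ (Fintype.piFinset fun _ : Fin n =>
                      Finset.Iic (∑ i, (α i + β i))).filter
                    (fun γ => ∑ i, γ i ≤ ∑ i, (α i + β i)),
                  ∑ ξ₀ ∈ Fintype.piFinset (fun i => Finset.Iic (ξ i)),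
                    a (m - l) (γ + ξ₀) *
                      (∏ i, ((γ i + ξ₀ i).choose (ξ₀ i) : ℝ)) *
                      (((2 * m + 1).choose (2 * l) : ℝ))⁻¹ *
                      ((∏ i, ((δ i).factorial : ℝ)) / ((2 * l).factorial : ℝ)) *
                      (∏ i, ((α i + ∑ j, γ j).choose (∑ j, γ j) : ℝ)) *
                      (∏ i, ((β i + ∑ j, γ j).choose (∑ j, γ j) : ℝ)) *
                      C ^ ((∑ i, (ξ i - ξ₀ i)) + 2 * (∑ i, δ i) + (∑ i, γ i) + 1))
          ≤ TgB * (2*C)^Sξ * 2^n * (A^(m-l) * ((2:ℝ)^(7*n+6) * C^7)^l) := by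
        intro l hl
        obtain ⟨hl1, hlm⟩ := Finset.mem_Icc.mp hl
        set V : ℝ := TgB * A^(m-l) * ((2:ℝ)^n * (2*C)^Sξ) *
          ((2:ℝ)^(4*l+4*n*l) * C^(7*l)) with hV
        have hV0 : (0:ℝ) ≤ V := by positivity
        -- innermost: for fixed δ α β γ, the ξ₀-sum is ≤ V
        have claimγ : ∀ δ ∈ (Fintype.piFinset fun _ : Fin n => Finset.Iic l).filter
              (fun δ => ∑ i, δ i = l),
            ∀ α ∈ Fintype.piFinset (fun i => Finset.Iic (δ i)),
            ∀ β ∈ Fintype.piFinset (fun i => Finset.Iic (δ i)),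
            ∀ γ ∈ (Fintype.piFinset fun _ : Fin n =>
                  Finset.Iic (∑ i, (α i + β i))).filter
                (fun γ => ∑ i, γ i ≤ ∑ i, (α i + β i)),
            (∑ ξ₀ ∈ Fintype.piFinset (fun i => Finset.Iic (ξ i)),
                    a (m - l) (γ + ξ₀) *
                      (∏ i, ((γ i + ξ₀ i).choose (ξ₀ i) : ℝ)) *
                      (((2 * m + 1).choose (2 * l) : ℝ))⁻¹ *
                      ((∏ i, ((δ i).factorial : ℝ)) / ((2 * l).factorial : ℝ)) *
                      (∏ i, ((α i + ∑ j, γ j).choose (∑ j, γ j) : ℝ)) *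
                      (∏ i, ((β i + ∑ j, γ j).choose (∑ j, γ j) : ℝ)) *
                      C ^ ((∑ i, (ξ i - ξ₀ i)) + 2 * (∑ i, δ i) + (∑ i, γ i) + 1)) ≤ V := by
          intro δ hδ α hα β hβ γ hγ
          rw [Finset.mem_filter] at hδ hγ
          have hδs : ∑ i, δ i = l := hδ.2
          have hαs : ∀ i, α i ≤ δ i := by
            have := Fintype.mem_piFinset.mp hα; simpa using this
          have hβs : ∀ i, β i ≤ δ i := by
            have := Fintype.mem_piFinset.mp hβ; simpa using this
          have hγs : ∑ i, γ i ≤ ∑ i, (α i + β i) := hγ.2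
          calc (∑ ξ₀ ∈ Fintype.piFinset (fun i => Finset.Iic (ξ i)),
                    a (m - l) (γ + ξ₀) *
                      (∏ i, ((γ i + ξ₀ i).choose (ξ₀ i) : ℝ)) *
                      (((2 * m + 1).choose (2 * l) : ℝ))⁻¹ *
                      ((∏ i, ((δ i).factorial : ℝ)) / ((2 * l).factorial : ℝ)) *
                      (∏ i, ((α i + ∑ j, γ j).choose (∑ j, γ j) : ℝ)) *
                      (∏ i, ((β i + ∑ j, γ j).choose (∑ j, γ j) : ℝ)) *
                      C ^ ((∑ i, (ξ i - ξ₀ i)) + 2 * (∑ i, δ i) + (∑ i, γ i) + 1))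
              ≤ ∑ ξ₀ ∈ Fintype.piFinset (fun i => Finset.Iic (ξ i)),
                  (TgB * A^(m-l) * ((2:ℝ)^(4*l+4*n*l) * C^(7*l))) *
                    (∏ i, ((2*C)^(ξ₀ i) * C^(ξ i - ξ₀ i))) := by
                apply Finset.sum_le_sum
                intro ξ₀ hξ₀
                have hξ₀s : ∀ i, ξ₀ i ≤ ξ i := by
                  have := Fintype.mem_piFinset.mp hξ₀; simpa using this
                have hb := term_bound n C hC m l hl1 hlm ξ δ α β γ ξ₀ A hA0 a
                  (hpos _ _) (IH (m-l) (by omega) (γ+ξ₀)) hδs hαs hβs hγs hξ₀s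
                calc a (m - l) (γ + ξ₀) *
                      (∏ i, ((γ i + ξ₀ i).choose (ξ₀ i) : ℝ)) *
                      (((2 * m + 1).choose (2 * l) : ℝ))⁻¹ *
                      ((∏ i, ((δ i).factorial : ℝ)) / ((2 * l).factorial : ℝ)) *
                      (∏ i, ((α i + ∑ j, γ j).choose (∑ j, γ j) : ℝ)) *
                      (∏ i, ((β i + ∑ j, γ j).choose (∑ j, γ j) : ℝ)) *
                      C ^ ((∑ i, (ξ i - ξ₀ i)) + 2 * (∑ i, δ i) + (∑ i, γ i) + 1)
                    ≤ TgB * A^(m-l) * (∏ i, ((2*C)^(ξ₀ i) * C^(ξ i - ξ₀ i))) *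
                      ((2:ℝ)^(4*l+4*n*l) * C^(7*l)) := hb
                  _ = (TgB * A^(m-l) * ((2:ℝ)^(4*l+4*n*l) * C^(7*l))) *
                      (∏ i, ((2*C)^(ξ₀ i) * C^(ξ i - ξ₀ i))) := by ring
            _ = (TgB * A^(m-l) * ((2:ℝ)^(4*l+4*n*l) * C^(7*l))) *
                  (∑ ξ₀ ∈ Fintype.piFinset (fun i => Finset.Iic (ξ i)),
                    ∏ i, ((2*C)^(ξ₀ i) * C^(ξ i - ξ₀ i))) := by
                rw [← Finset.mul_sum]
            _ ≤ (TgB * A^(m-l) * ((2:ℝ)^(4*l+4*n*l) * C^(7*l))) *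
                  ((2:ℝ)^n * (2*C)^Sξ) := by
                apply mul_le_mul_of_nonneg_left (xi0_sum_bound n C hC ξ) (by positivity)
            _ = V := by rw [hV]; ring
        have hcard_δ : (((Fintype.piFinset fun _ : Fin n => Finset.Iic l).filter
            (fun δ => ∑ i, δ i = l)).card : ℝ) ≤ (2:ℝ)^(l*n) := by
          have h1 : ((Fintype.piFinset fun _ : Fin n => Finset.Iic l).filter
              (fun δ => ∑ i, δ i = l)).card ≤ 2^(l*n) := by
            refine le_trans (Finset.card_filter_le _ _) ?_
            rw [Fintype.card_piFinset]
            simp only [Nat.card_Iic, Finset.prod_const, Finset.card_univ, Fintype.card_fin]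
            calc (l+1)^n ≤ (2^l)^n := Nat.pow_le_pow_left (l.lt_two_pow_self) n
              _ = 2^(l*n) := by rw [← pow_mul]
          exact_mod_cast h1
        have hcard_β : ∀ δ : Fin n → ℕ, (∑ i, δ i = l) →
            (((Fintype.piFinset fun i => Finset.Iic (δ i)).card : ℝ)) ≤ (2:ℝ)^l := by
          intro δ hδs
          have h1 : (Fintype.piFinset fun i => Finset.Iic (δ i)).card ≤ 2^l := by
            rw [Fintype.card_piFinset]
            simp only [Nat.card_Iic]
            calc ∏ i, (δ i + 1) ≤ ∏ i : Fin n, 2^(δ i) :=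
                Finset.prod_le_prod' (fun i _ => (δ i).lt_two_pow_self)
              _ = 2^(∑ i, δ i) := Finset.prod_pow_eq_pow_sum _ _ _
              _ = 2^l := by rw [hδs]
          exact_mod_cast h1
        have hcard_γ : ∀ k : ℕ, k ≤ 2*l →
            ((((Fintype.piFinset fun _ : Fin n => Finset.Iic k).filter
              (fun γ => ∑ i, γ i ≤ k)).card : ℝ)) ≤ (2:ℝ)^(2*l*n) := by
          intro k hk
          have h1 : ((Fintype.piFinset fun _ : Fin n => Finset.Iic k).filter
              (fun γ => ∑ i, γ i ≤ k)).card ≤ 2^(2*l*n) := by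
            refine le_trans (Finset.card_filter_le _ _) ?_
            rw [Fintype.card_piFinset]
            simp only [Nat.card_Iic, Finset.prod_const, Finset.card_univ, Fintype.card_fin]
            calc (k+1)^n ≤ (2^(2*l))^n :=
                Nat.pow_le_pow_left (by have := (2*l).lt_two_pow_self; omega) n
              _ = 2^(2*l*n) := by rw [← pow_mul]
          exact_mod_cast h1
        refine le_trans (sum_le_pow_mul _ _ ((2:ℝ)^(l*n))
          (((2:ℝ)^l) * (((2:ℝ)^l) * ((2:ℝ)^(2*l*n) * V))) (by positivity) hcard_δ ?_) ?_
        · intro δ hδ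
          have hδs : ∑ i, δ i = l := (Finset.mem_filter.mp hδ).2
          refine sum_le_pow_mul _ _ _ _ (by positivity) (hcard_β δ hδs) ?_
          intro α hα
          refine sum_le_pow_mul _ _ _ _ (by positivity) (hcard_β δ hδs) ?_
          intro β hβ
          have hαs : ∀ i, α i ≤ δ i := by
            have := Fintype.mem_piFinset.mp hα; simpa using this
          have hβs : ∀ i, β i ≤ δ i := by
            have := Fintype.mem_piFinset.mp hβ; simpa using this
          have hk : ∑ i, (α i + β i) ≤ 2*l := by
            rw [Finset.sum_add_distrib]
            have h1 : ∑ i, α i ≤ l := hδs ▸ Finset.sum_le_sum (fun i _ => hαs i)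
            have h2 : ∑ i, β i ≤ l := hδs ▸ Finset.sum_le_sum (fun i _ => hβs i)
            omega
          refine sum_le_pow_mul _ _ _ _ hV0 (hcard_γ _ hk) ?_
          intro γ hγ
          exact claimγ δ hδ α hα β hβ γ hγ
        · apply le_of_eq
          rw [hV, show ((2:ℝ)^(7*n+6)*C^7)^l = 2^((7*n+6)*l) * C^(7*l) from by
            rw [mul_pow, ← pow_mul, ← pow_mul]]
          have e2 : (2:ℝ)^((7*n+6)*l) =
              2^(l*n) * 2^l * 2^l * 2^(2*l*n) * 2^(4*l+4*n*l) := by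
            rw [← pow_add, ← pow_add, ← pow_add, ← pow_add]
            congr 1
            ring
          rw [e2]
          ring
      have hBl : ∀ l ∈ Finset.Icc 1 m,
          A^(m-l) * ((2:ℝ)^(7*n+6) * C^7)^l = A^m * (((1:ℝ)/4)^n)^l := by
        intro l hl
        obtain ⟨h1, h2⟩ := Finset.mem_Icc.mp hl
        have hb : ((2:ℝ)^(7*n+6) * C^7) = A * ((1:ℝ)/4)^n := by
          rw [hAdef, div_pow, one_pow, show (4:ℝ) = 2^2 by norm_num, ← pow_mul]
          rw [show (2:ℝ)^(9*n+6) = 2^(7*n+6) * 2^(2*n) from by rw [← pow_add]; congr 1; ring]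
          have h2n : ((2:ℝ)^(2*n)) ≠ 0 := by positivity
          field_simp
        rw [hb, mul_pow A (((1:ℝ)/4)^n) l, ← mul_assoc, ← pow_add, Nat.sub_add_cancel h2]
      have hr0 : (0:ℝ) ≤ ((1:ℝ)/4)^n := by positivity
      have hr14 : ((1:ℝ)/4)^n ≤ 1/4 := by
        calc ((1:ℝ)/4)^n ≤ ((1:ℝ)/4)^1 :=
          pow_le_pow_of_le_one (by norm_num) (by norm_num) hn
        _ = 1/4 := pow_one _
      have hgeo : ∑ l ∈ Finset.Icc 1 m, (((1:ℝ)/4)^n)^l ≤ 2 * ((1:ℝ)/4)^n :=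
        geom_bound _ hr0 hr14 m
      have hsmall : (2:ℝ)^n * (2*((1:ℝ)/4)^n) ≤ 1 := by
        have he : (2:ℝ)^n * (((1:ℝ)/4)^n) = ((1:ℝ)/2)^n := by
          rw [← mul_pow]; norm_num
        have h12 : ((1:ℝ)/2)^n ≤ (1:ℝ)/2 := by
          calc ((1:ℝ)/2)^n ≤ ((1:ℝ)/2)^1 :=
            pow_le_pow_of_le_one (by norm_num) (by norm_num) hn
          _ = 1/2 := pow_one _
        nlinarith
      calc (∑ l ∈ Finset.Icc 1 m,
          ∑ δ ∈ (Fintype.piFinset fun _ : Fin n => Finset.Iic l).filter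
              (fun δ => ∑ i, δ i = l),
            ∑ α ∈ Fintype.piFinset (fun i => Finset.Iic (δ i)),
              ∑ β ∈ Fintype.piFinset (fun i => Finset.Iic (δ i)),
                ∑ γ ∈ (Fintype.piFinset fun _ : Fin n =>
                      Finset.Iic (∑ i, (α i + β i))).filter
                    (fun γ => ∑ i, γ i ≤ ∑ i, (α i + β i)),
                  ∑ ξ₀ ∈ Fintype.piFinset (fun i => Finset.Iic (ξ i)),
                    a (m - l) (γ + ξ₀) *
                      (∏ i, ((γ i + ξ₀ i).choose (ξ₀ i) : ℝ)) *
                      (((2 * m + 1).choose (2 * l) : ℝ))⁻¹ *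
                      ((∏ i, ((δ i).factorial : ℝ)) / ((2 * l).factorial : ℝ)) *
                      (∏ i, ((α i + ∑ j, γ j).choose (∑ j, γ j) : ℝ)) *
                      (∏ i, ((β i + ∑ j, γ j).choose (∑ j, γ j) : ℝ)) *
                      C ^ ((∑ i, (ξ i - ξ₀ i)) + 2 * (∑ i, δ i) + (∑ i, γ i) + 1))
          ≤ ∑ l ∈ Finset.Icc 1 m,
              TgB * (2*C)^Sξ * 2^n * (A^(m-l) * ((2:ℝ)^(7*n+6) * C^7)^l) :=
            Finset.sum_le_sum main_l
        _ = TgB * (2*C)^Sξ * 2^n *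
              ∑ l ∈ Finset.Icc 1 m, (A^(m-l) * ((2:ℝ)^(7*n+6) * C^7)^l) := by
            rw [← Finset.mul_sum]
        _ = TgB * (2*C)^Sξ * 2^n *
              (A^m * ∑ l ∈ Finset.Icc 1 m, (((1:ℝ)/4)^n)^l) := by
            have hs : ∑ l ∈ Finset.Icc 1 m, (A^(m-l) * ((2:ℝ)^(7*n+6) * C^7)^l)
                = A^m * ∑ l ∈ Finset.Icc 1 m, (((1:ℝ)/4)^n)^l := by
              rw [Finset.mul_sum]
              exact Finset.sum_congr rfl hBl
            rw [hs]
        _ ≤ TgB * (2*C)^Sξ * 2^n * (A^m * (2*((1:ℝ)/4)^n)) := by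
            apply mul_le_mul_of_nonneg_left _ (by positivity)
            exact mul_le_mul_of_nonneg_left hgeo (by positivity)
        _ = (TgB * A^m * (2*C)^Sξ) * ((2:ℝ)^n * (2*((1:ℝ)/4)^n)) := by ring
        _ ≤ (TgB * A^m * (2*C)^Sξ) * 1 :=
            mul_le_mul_of_nonneg_left hsmall (by positivity)
        _ = TgB * A^m * (2*C)^Sξ := mul_one _
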